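/- Let r ≥ 1 and k ≥ 0 be integers and let R = ℚ[ℏ,𝔟,P_1,…,P_r]. For a bridge γ ∈ Γ^{≥0}_{(0,k)→(N,0)} with heights h_0 = k, h_1, …, h_N = 0, define Ŵ_r(γ) := w_1∘⋯∘w_N, where w_u = J_{h_{u−1}−h_u} if the u-th step is not flat and w_u is scalar multiplication by −ℏ𝔟(h_u + r − u) if the u-th step is flat. Then the following identity of locally finite R-linear operators on R[p̃] holds: Σ_{γ ∈ Γ^{≥0}_{(0,k)→(r,0)}} wt̃(γ|(P_1,…,P_r)) = Σ_{j=0}^{r} ( Σ_{1 ≤ n_1 < ⋯ < n_j ≤ r} ∏_{m=1}^{j} (P_{r+1−n_m} + ℏ𝔟(r−n_m+m−1)) ) · Σ_{γ ∈ Γ^{≥0}_{(0,k)→(r−j,0)}} Ŵ_r(γ). (This is the P-part of the simplification lemma expressing the operators D_k through the weights wt̃, proved via Lemma 4.7 in the paper.) -/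

import Mathlib

open MvPolynomial

noncomputable section Stmt6

/-- The coefficient ring `R = ℚ[ℏ, 𝔟, P_1, …, P_r]`. -/
abbrev RR (r : ℕ) : Type := MvPolynomial (Fin (r + 2)) ℚ

/-- The ring `R[p̃] = R[p̃_1, p̃_2, …]` (variable `k` stands for `p̃_k`; index `0` is unused). -/
abbrev PP (r : ℕ) : Type := MvPolynomial ℕ (RR r)

/-- The indeterminate `ℏ`. -/
def hb (r : ℕ) : RR r := X 0

/-- The indeterminate `𝔟`. -/
def bb (r : ℕ) : RR r := X 1

/-- The indeterminates `P_1, …, P_r` (zero-indexed). -/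
def Pv (r : ℕ) (i : Fin r) : RR r := X i.succ.succ

/-- `P_a` for a 1-based index `a ∈ [r]` (and `0` outside this range). -/
def Pn (r : ℕ) (a : ℕ) : RR r :=
  if h : 1 ≤ a ∧ a ≤ r then Pv r ⟨a - 1, by omega⟩ else 0

/-- The operators `J_k` on `R[p̃]`: `J_k = ℏ k ∂_{p̃_k}` for `k > 0`, `J_0 = 0`,
and `J_{-k} = ℏ·p̃_k` (multiplication) for `k > 0`. -/
def J (r : ℕ) (k : ℤ) : PP r → PP r :=
  if 0 < k then fun p => C (hb r) * (k.toNat : PP r) * pderiv k.toNat p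
  else if k < 0 then fun p => C (hb r) * X (-k).toNat * p
  else 0

/-- The set of paths from `(x, y)` to `(x + N, y')`, encoded as the list of the `N`
successive height increments. -/
def PathSet (y : ℤ) (N : ℕ) (y' : ℤ) : Set (List ℤ) :=
  {L | L.length = N ∧ y + L.sum = y'}

/-- The set of bridges from `(x, y)` to `(x + N, y')`: paths whose intermediate heights
`h_1, …, h_{N-1}` are all nonnegative. -/
def BridgeSet (y : ℤ) (N : ℕ) (y' : ℤ) : Set (List ℤ) :=
  {L | L ∈ PathSet y N y' ∧ ∀ j : ℕ, 0 < j → j < N → 0 ≤ y + (L.take j).sum}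

/-- A generic path weight: processed from the left, at (1-based) position `u` and current
height `y`, a non-flat step of increment `d` contributes the operator `J_{-d}`
(i.e. `J_{h_{j-1} - h_j}`), while a flat step contributes scalar multiplication by
`flat u y`. The first step's operator is applied last. -/
def wtGen (r : ℕ) (flat : ℕ → ℤ → RR r) : ℕ → ℤ → List ℤ → PP r → PP r
  | _, _, [] => id
  | u, y, d :: rest =>
      (if d = 0 then (fun p => C (flat u y) * p) else J r (-d)) ∘
        wtGen r flat (u + 1) (y + d) rest

/-- The weight `wt̃(γ|(P_1,…,P_r))`: flat step at position `u` and height `y` gives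
`P_u − ℏ𝔟 y`. -/
def wtP (r : ℕ) : ℕ → ℤ → List ℤ → PP r → PP r :=
  wtGen r fun u y => Pn r u - hb r * bb r * (y : RR r)

/-- The weight `Ŵ_r(γ)`: flat step at position `u` and height `y` gives
`−ℏ𝔟 (h_u + r − u)`. -/
def wtHat (r : ℕ) : ℕ → ℤ → List ℤ → PP r → PP r :=
  wtGen r fun u y => -(hb r * bb r * ((y + (r : ℤ) - (u : ℤ) : ℤ) : RR r))

/-- The set of strictly increasing lists of length `j` with entries in `[lo..hi]`. -/
def IncLists (j lo hi : ℕ) : Set (List ℕ) :=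
  {ns | ns.length = j ∧ ns.Chain' (· < ·) ∧ ∀ c ∈ ns, lo ≤ c ∧ c ≤ hi}

/-- The coefficient `Σ_{1 ≤ n_1 < ⋯ < n_j ≤ r} ∏_{m=1}^{j} (P_{r+1−n_m} + ℏ𝔟(r−n_m+m−1))`
(the list `ns.enum` provides the pairs `(m−1, n_m)`). -/
def OmP (r j : ℕ) : RR r :=
  ∑ᶠ ns ∈ IncLists j 1 r,
    ((ns.zipIdx.map Prod.swap).map fun md =>
      Pn r (r + 1 - md.2) +
        hb r * bb r * (((r : ℤ) - (md.2 : ℤ) + (md.1 : ℤ) : ℤ) : RR r)).prod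

namespace Stmt6Aux

open Function

/-! ### Basic setup -/

def cc (r : ℕ) : RR r := hb r * bb r

/-- Flat weight function attached to a sequence of scalars. -/
def fq (r : ℕ) (q : ℕ → RR r) : ℕ → ℤ → RR r := fun u y => q u - cc r * (y : RR r)

/-- The "hat" scalar sequence `u ↦ c (u - b)`. -/
def wq (r : ℕ) (b : ℤ) : ℕ → RR r := fun u => cc r * (((u : ℤ) - b : ℤ) : RR r)

/-- Paths of length `n` from height `g` to height `t` all of whose heights are nonnegative. -/
def NNB (g n t : ℕ) : Set (List ℤ) :=
  {L | L.length = n ∧ (g : ℤ) + L.sum = (t : ℤ) ∧ ∀ j ≤ n, 0 ≤ (g : ℤ) + (L.take j).sum}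

/-- The operator given by the sum of the weights over all nonnegative paths. -/
def Uop (r : ℕ) (f : ℕ → ℤ → RR r) (n g t : ℕ) (p : PP r) : PP r :=
  ∑ᶠ L ∈ NNB g n t, wtGen r f 1 (g : ℤ) L p

/-- The operator of the last step of a path of length `n` going from `s` to `t`. -/
def Estep (r : ℕ) (f : ℕ → ℤ → RR r) (n s t : ℕ) (p : PP r) : PP r :=
  if s = t then C (f n (t : ℤ)) * p else J r ((s : ℤ) - (t : ℤ)) p

/-! ### Linearity of the operators -/

lemma J_zero (r : ℕ) (k : ℤ) : J r k 0 = 0 := by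
  unfold J; split_ifs <;> simp

lemma J_add (r : ℕ) (k : ℤ) (p q : PP r) : J r k (p + q) = J r k p + J r k q := by
  unfold J; split_ifs <;> simp [mul_add]

lemma J_Cmul (r : ℕ) (k : ℤ) (a : RR r) (p : PP r) : J r k (C a * p) = C a * J r k p := by
  unfold J; split_ifs with h1 h2
  · simp only [pderiv_C_mul]; ring
  · simp only []; ring
  · simp

lemma wtGen_cons (r : ℕ) (f : ℕ → ℤ → RR r) (u : ℕ) (y : ℤ) (d : ℤ) (L : List ℤ) (p : PP r) :
    wtGen r f u y (d :: L) p
      = (if d = 0 then (fun q => C (f u y) * q) else J r (-d))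
          (wtGen r f (u + 1) (y + d) L p) := rfl

lemma wtGen_nil (r : ℕ) (f : ℕ → ℤ → RR r) (u : ℕ) (y : ℤ) (p : PP r) :
    wtGen r f u y [] p = p := rfl

lemma wtGen_zero (r : ℕ) (f : ℕ → ℤ → RR r) :
    ∀ (L : List ℤ) (u : ℕ) (y : ℤ), wtGen r f u y L 0 = 0
  | [], _, _ => rfl
  | d :: L, u, y => by
    rw [wtGen_cons, wtGen_zero r f L]
    split_ifs <;> simp [J_zero]

lemma wtGen_add (r : ℕ) (f : ℕ → ℤ → RR r) :
    ∀ (L : List ℤ) (u : ℕ) (y : ℤ) (p q : PP r),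
      wtGen r f u y L (p + q) = wtGen r f u y L p + wtGen r f u y L q
  | [], _, _, _, _ => rfl
  | d :: L, u, y, p, q => by
    rw [wtGen_cons, wtGen_cons, wtGen_cons, wtGen_add r f L]
    split_ifs <;> simp [J_add, mul_add]

lemma wtGen_Cmul (r : ℕ) (f : ℕ → ℤ → RR r) :
    ∀ (L : List ℤ) (u : ℕ) (y : ℤ) (a : RR r) (p : PP r),
      wtGen r f u y L (C a * p) = C a * wtGen r f u y L p
  | [], _, _, _, _ => rfl
  | d :: L, u, y, a, p => by
    rw [wtGen_cons, wtGen_cons, wtGen_Cmul r f L]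
    split_ifs
    · ring
    · exact J_Cmul r (-d) a _

lemma wtGen_append (r : ℕ) (f : ℕ → ℤ → RR r) :
    ∀ (L : List ℤ) (u : ℕ) (y : ℤ) (e : ℤ) (p : PP r),
      wtGen r f u y (L ++ [e]) p
        = wtGen r f u y L
            ((if e = 0 then (fun q => C (f (u + L.length) (y + L.sum)) * q)
              else J r (-e)) p)
  | [], u, y, e, p => by
    simp only [List.nil_append, List.length_nil, List.sum_nil, add_zero]
    rfl
  | d :: L, u, y, e, p => by
    rw [List.cons_append, wtGen_cons, wtGen_append r f L, wtGen_cons]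
    have h1 : u + 1 + L.length = u + (d :: L).length := by
      simp [List.length_cons]; omega
    have h2 : y + d + L.sum = y + (d :: L).sum := by
      simp [List.sum_cons]; ring
    rw [h1, h2]

/-! ### Finiteness -/

lemma pderiv_vanish {r : ℕ} {m : ℕ} {p : PP r} (h : m ∉ p.vars) : pderiv m p = 0 :=
  pderiv_eq_zero_of_notMem_vars h

lemma finPairs (r : ℕ) (f : ℕ → ℤ → RR r) (t : ℕ) :
    ∀ (n u : ℕ) (p : PP r),
      {x : ℕ × List ℤ | x.2 ∈ NNB x.1 n t ∧ wtGen r f u (x.1 : ℤ) x.2 p ≠ 0}.Finite := by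
  intro n
  induction n with
  | zero =>
    intro u p
    apply Set.Finite.subset (Set.finite_singleton (t, ([] : List ℤ)))
    rintro ⟨g, L⟩ ⟨⟨hlen, hsum, -⟩, -⟩
    have hL : L = [] := List.length_eq_zero_iff.mp hlen
    subst hL
    simp only [List.sum_nil, add_zero] at hsum
    have : g = t := by exact_mod_cast hsum
    simp [this]
  | succ n ih =>
    intro u p
    have hT := ih (u + 1) p
    apply Set.Finite.subset
      (Set.Finite.biUnion hT (fun y _ =>
        (((Set.finite_Icc (0 : ℤ) (y.1 : ℤ)).union
          (((wtGen r f (u + 1) (y.1 : ℤ) y.2 p).vars.finite_toSet).image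
            (fun m : ℕ => -(m : ℤ)))).image
          (fun d : ℤ => ((((y.1 : ℤ) - d).toNat, d :: y.2) : ℕ × List ℤ)))))
    rintro ⟨g, L⟩ ⟨hmem, hne⟩
    obtain ⟨hlen, hsum, hall⟩ := hmem
    rcases L with _ | ⟨d, L'⟩
    · simp at hlen
    have h1 : 0 ≤ (g : ℤ) + d := by
      have := hall 1 (by omega)
      simpa using this
    set g' : ℕ := ((g : ℤ) + d).toNat with hg'def
    have hg' : (g' : ℤ) = (g : ℤ) + d := Int.toNat_of_nonneg h1
    have htail : L' ∈ NNB g' n t := by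
      refine ⟨by simpa using hlen, ?_, fun j hj => ?_⟩
      · rw [hg']
        simp only [List.sum_cons] at hsum
        linarith
      · have := hall (j + 1) (by omega)
        rw [hg']
        simpa [List.take_succ_cons, List.sum_cons, add_assoc] using this
    have hQ : wtGen r f (u + 1) ((g : ℤ) + d) L' p ≠ 0 := by
      intro h0
      apply hne
      rw [wtGen_cons, h0]
      split_ifs <;> simp [J_zero]
    have hQ' : wtGen r f (u + 1) (g' : ℤ) L' p ≠ 0 := by rw [hg']; exact hQ
    have hyT : ((g', L') : ℕ × List ℤ) ∈
        {x : ℕ × List ℤ | x.2 ∈ NNB x.1 n t ∧ wtGen r f (u + 1) (x.1 : ℤ) x.2 p ≠ 0} :=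
      ⟨htail, hQ'⟩
    refine Set.mem_biUnion hyT ?_
    refine ⟨d, ?_, ?_⟩
    · by_cases hd : 0 ≤ d
      · left
        refine ⟨hd, ?_⟩
        have : (0 : ℤ) ≤ (g : ℤ) := Int.ofNat_nonneg g
        omega
      · right
        push_neg at hd
        have hd0 : ¬ d = 0 := by omega
        have hJ : wtGen r f u (g : ℤ) (d :: L') p
            = J r (-d) (wtGen r f (u + 1) ((g : ℤ) + d) L' p) := by
          rw [wtGen_cons, if_neg hd0]
        rw [hJ] at hne
        have hpos : 0 < -d := by omega
        rw [J, if_pos hpos] at hne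
        have hvar : (-d).toNat ∈ (wtGen r f (u + 1) ((g : ℤ) + d) L' p).vars := by
          by_contra hv
          rw [pderiv_vanish hv, mul_zero] at hne
          exact hne rfl
        refine ⟨(-d).toNat, ?_, ?_⟩
        · simp only [Finset.coe_sort_coe, Set.mem_setOf_eq, Finset.mem_coe]
          rw [hg']
          exact hvar
        · show -(((-d).toNat : ℕ) : ℤ) = d
          omega
    · have hg2 : ((g' : ℤ) - d).toNat = g := by omega
      simp [hg2]

lemma Uop_finsupp (r : ℕ) (f : ℕ → ℤ → RR r) (n g t : ℕ) (p : PP r) :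
    (NNB g n t ∩ support fun L => wtGen r f 1 (g : ℤ) L p).Finite := by
  apply Set.Finite.subset ((finPairs r f t n 1 p).image Prod.snd)
  rintro L ⟨hL, hne⟩
  exact ⟨(g, L), ⟨hL, hne⟩, rfl⟩

/-! ### Small `finsum` helpers -/

lemma finsum_mem_biUnion_finset {α M : Type*} [AddCommMonoid M] (F : α → M)
    (S : Finset ℕ) (Φ : ℕ → Set α)
    (hdisj : ∀ s ∈ S, ∀ s' ∈ S, s ≠ s' → Disjoint (Φ s) (Φ s'))
    (hfin : ∀ s ∈ S, (Φ s ∩ support F).Finite) :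
    ∑ᶠ a ∈ ⋃ s ∈ (S : Set ℕ), Φ s, F a = ∑ s ∈ S, ∑ᶠ a ∈ Φ s, F a := by
  classical
  induction S using Finset.induction_on with
  | empty => simp
  | @insert a S' ha ih =>
    have hUn : (⋃ s ∈ ((insert a S' : Finset ℕ) : Set ℕ), Φ s)
        = Φ a ∪ ⋃ s ∈ (S' : Set ℕ), Φ s := by
      simp [Set.biUnion_insert]
    have hd : Disjoint (Φ a) (⋃ s ∈ (S' : Set ℕ), Φ s) := by
      rw [Set.disjoint_left]
      intro x hx hx'
      rw [Set.mem_iUnion₂] at hx'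
      obtain ⟨s, hs, hxs⟩ := hx'
      have hne : a ≠ s := by rintro rfl; exact ha hs
      exact (Set.disjoint_left.mp
        (hdisj a (Finset.mem_insert_self a S') s (Finset.mem_insert_of_mem hs) hne)) hx hxs
    have h1 : (Φ a ∩ support F).Finite := hfin a (Finset.mem_insert_self a S')
    have h2 : ((⋃ s ∈ (S' : Set ℕ), Φ s) ∩ support F).Finite := by
      apply Set.Finite.subset
        (Set.Finite.biUnion S'.finite_toSet
          (fun s hs => hfin s (Finset.mem_insert_of_mem hs)))
      rintro x ⟨hx, hsupp⟩
      rw [Set.mem_iUnion₂] at hx ⊢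
      obtain ⟨s, hs, hxs⟩ := hx
      exact ⟨s, hs, hxs, hsupp⟩
    rw [hUn, finsum_mem_union' hd h1 h2, Finset.sum_insert ha,
      ih (fun s hs s' hs' h => hdisj s (Finset.mem_insert_of_mem hs) s'
        (Finset.mem_insert_of_mem hs') h)
        (fun s hs => hfin s (Finset.mem_insert_of_mem hs))]

lemma Uop_zero (r : ℕ) (f : ℕ → ℤ → RR r) (n g t : ℕ) : Uop r f n g t 0 = 0 := by
  unfold Uop
  have : ∀ L ∈ NNB g n t, wtGen r f 1 (g : ℤ) L (0 : PP r) = 0 :=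
    fun L _ => wtGen_zero r f L 1 (g : ℤ)
  rw [finsum_mem_congr rfl this]
  simp

lemma Uop_add (r : ℕ) (f : ℕ → ℤ → RR r) (n g t : ℕ) (p q : PP r) :
    Uop r f n g t (p + q) = Uop r f n g t p + Uop r f n g t q := by
  unfold Uop
  rw [finsum_mem_congr rfl (fun L _ => wtGen_add r f L 1 (g : ℤ) p q)]
  exact finsum_mem_add_distrib' (Uop_finsupp r f n g t p) (Uop_finsupp r f n g t q)

lemma Uop_Cmul (r : ℕ) (f : ℕ → ℤ → RR r) (n g t : ℕ) (a : RR r) (p : PP r) :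
    Uop r f n g t (C a * p) = C a * Uop r f n g t p := by
  unfold Uop
  rw [finsum_mem_congr rfl (fun L _ => wtGen_Cmul r f L 1 (g : ℤ) a p)]
  have hfin := Uop_finsupp r f n g t p
  rw [finsum_mem_eq_sum_of_inter_support_eq _
      (t := hfin.toFinset) ?h1,
    finsum_mem_eq_sum_of_inter_support_eq (fun L => wtGen r f 1 (g : ℤ) L p)
      (t := hfin.toFinset) ?h2,
    Finset.mul_sum]
  case h1 =>
    ext L
    simp only [Set.mem_inter_iff, mem_support, Set.Finite.coe_toFinset, Set.mem_setOf_eq,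
      Finset.coe_sort_coe]
    constructor
    · rintro ⟨hL, hne⟩
      refine ⟨⟨hL, fun h0 => hne ?_⟩, hne⟩
      rw [h0, mul_zero]
    · rintro ⟨⟨hL, _⟩, hne⟩
      exact ⟨hL, hne⟩
  case h2 =>
    ext L
    simp only [Set.mem_inter_iff, mem_support, Set.Finite.coe_toFinset, Set.mem_setOf_eq]
    tauto

end Stmt6Aux
namespace Stmt6Aux

open Function

/-! ### `NNB` basics -/

lemma NNB_len_zero (g t : ℕ) : NNB g 0 t = if g = t then {([] : List ℤ)} else ∅ := by
  ext L
  simp only [NNB, Set.mem_setOf_eq, List.length_eq_zero_iff]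
  constructor
  · rintro ⟨rfl, hsum, -⟩
    simp only [List.sum_nil, add_zero] at hsum
    have : g = t := by exact_mod_cast hsum
    simp [this]
  · intro hL
    split_ifs at hL with hgt
    · subst hgt
      simp only [Set.mem_singleton_iff] at hL
      subst hL
      exact ⟨rfl, by simp, fun j _ => by simp⟩
    · exact absurd hL (Set.notMem_empty L)

lemma Uop_len_zero (r : ℕ) (f : ℕ → ℤ → RR r) (g t : ℕ) (p : PP r) :
    Uop r f 0 g t p = if g = t then p else 0 := by
  unfold Uop
  rw [NNB_len_zero]
  split_ifs
  · rw [finsum_mem_singleton]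
    rfl
  · rw [finsum_mem_empty]

lemma bridge_eq_NNB (g n t : ℕ) : BridgeSet (g : ℤ) n (t : ℤ) = NNB g n t := by
  ext L
  simp only [BridgeSet, PathSet, NNB, Set.mem_setOf_eq]
  constructor
  · rintro ⟨⟨hlen, hsum⟩, hmid⟩
    refine ⟨hlen, hsum, fun j hj => ?_⟩
    rcases Nat.eq_zero_or_pos j with rfl | hj0
    · simp
    rcases eq_or_lt_of_le hj with rfl | hlt
    · rw [← hlen, List.take_of_length_le le_rfl, hsum]
      exact Int.ofNat_nonneg t
    · exact hmid j hj0 (by omega)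
  · rintro ⟨hlen, hsum, hall⟩
    exact ⟨⟨hlen, hsum⟩, fun j h0 hn => hall j (le_of_lt hn)⟩

/-! ### The one-step recursion -/

lemma Brec (r : ℕ) (f : ℕ → ℤ → RR r) (n g t : ℕ) (p : PP r) (S : Finset ℕ) (htS : t ∈ S)
    (hS : ∀ s : ℕ, s ∉ S → s ≠ t ∧ J r ((s : ℤ) - (t : ℤ)) p = 0) :
    Uop r f (n + 1) g t p = ∑ s ∈ S, Uop r f n g s (Estep r f (n + 1) s t p) := by
  classical
  set F : List ℤ → PP r := fun L => wtGen r f 1 (g : ℤ) L p with hF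
  set Φ : ℕ → Set (List ℤ) :=
    fun s => (fun L' : List ℤ => L' ++ [(t : ℤ) - (s : ℤ)]) '' NNB g n s with hΦ
  have hsub : ∀ s : ℕ, Φ s ⊆ NNB g (n + 1) t := by
    rintro s L ⟨L', ⟨hlen, hsum, hall⟩, rfl⟩
    refine ⟨by simp [hlen], ?_, fun j hj => ?_⟩
    · have h1 : (L' ++ [(t : ℤ) - (s : ℤ)]).sum = L'.sum + ((t : ℤ) - (s : ℤ)) := by simp
      rw [h1]; omega
    · rcases Nat.lt_or_ge j (n + 1) with hlt | hge
      · have hj' : j ≤ n := by omega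
        have h2 : (L' ++ [(t : ℤ) - (s : ℤ)]).take j = L'.take j := by
          rw [List.take_append]
          have : j - L'.length = 0 := by omega
          simp [this]
        rw [h2]
        exact hall j hj'
      · have hj' : j = n + 1 := by omega
        subst hj'
        rw [List.take_of_length_le (by simp [hlen])]
        have h1 : (L' ++ [(t : ℤ) - (s : ℤ)]).sum = L'.sum + ((t : ℤ) - (s : ℤ)) := by simp
        rw [h1]
        omega
  have hcover : ∀ L ∈ NNB g (n + 1) t, F L ≠ 0 → ∃ s ∈ S, L ∈ Φ s := by
    intro L hL hne
    obtain ⟨hlen, hsum, hall⟩ := hL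
    have hLne : L ≠ [] := by
      intro h; rw [h] at hlen; simp at hlen
    have hsplit : L.dropLast ++ [L.getLast hLne] = L := List.dropLast_append_getLast hLne
    have hdl : L.dropLast = L.take n := by
      rw [List.dropLast_eq_take, hlen]
      simp
    have hlen' : L.dropLast.length = n := by
      rw [hdl, List.length_take, hlen]; omega
    have hσ : 0 ≤ (g : ℤ) + L.dropLast.sum := by
      rw [hdl]; exact hall n (by omega)
    set s : ℕ := ((g : ℤ) + L.dropLast.sum).toNat with hsdef
    have hs : (s : ℤ) = (g : ℤ) + L.dropLast.sum := Int.toNat_of_nonneg hσ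
    have hsumL : L.dropLast.sum + L.getLast hLne = L.sum := by
      conv_rhs => rw [← hsplit]
      simp
    have hL' : L.dropLast ∈ NNB g n s := by
      refine ⟨hlen', by rw [hs], fun j hj => ?_⟩
      rw [hdl, List.take_take]
      have : min j n = j := by omega
      rw [this]
      exact hall j (by omega)
    have he : L.getLast hLne = (t : ℤ) - (s : ℤ) := by
      rw [hs]; omega
    have hsS : s ∈ S := by
      by_contra hns
      obtain ⟨hst, hJ⟩ := hS s hns
      apply hne
      rw [hF]
      show wtGen r f 1 (g : ℤ) L p = 0
      conv_lhs => rw [← hsplit]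
      rw [wtGen_append]
      have he0 : ¬ (L.getLast hLne = 0) := by
        rw [he]
        intro h
        have h2 : (s : ℤ) = (t : ℤ) := by omega
        exact hst (by exact_mod_cast h2)
      rw [if_neg he0]
      have hJ2 : J r (-(L.getLast hLne)) p = 0 := by
        rw [he]
        have h3 : -((t : ℤ) - (s : ℤ)) = (s : ℤ) - (t : ℤ) := by ring
        rw [h3]
        exact hJ
      rw [hJ2, wtGen_zero]
    refine ⟨s, hsS, L.dropLast, hL', ?_⟩
    show L.dropLast ++ [(t : ℤ) - (s : ℤ)] = L
    rw [← he, hsplit]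
  have hdisj : ∀ s ∈ S, ∀ s' ∈ S, s ≠ s' → Disjoint (Φ s) (Φ s') := by
    intro s _ s' _ hne
    rw [Set.disjoint_left]
    rintro L ⟨L1, _, rfl⟩ ⟨L2, _, heq⟩
    have h2 := (List.append_inj' heq rfl).2
    have h3 : (t : ℤ) - (s' : ℤ) = (t : ℤ) - (s : ℤ) := by
      simpa using h2
    have : s' = s := by omega
    exact hne this.symm
  have hstep1 : ∑ᶠ L ∈ NNB g (n + 1) t, F L = ∑ᶠ L ∈ ⋃ s ∈ (S : Set ℕ), Φ s, F L := by
    apply finsum_mem_inter_support_eq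
    ext L
    simp only [Set.mem_inter_iff, mem_support]
    constructor
    · rintro ⟨hL, hne⟩
      obtain ⟨s, hs, hLs⟩ := hcover L hL hne
      exact ⟨Set.mem_biUnion hs hLs, hne⟩
    · rintro ⟨hL, hne⟩
      rw [Set.mem_iUnion₂] at hL
      obtain ⟨s, _, hLs⟩ := hL
      exact ⟨hsub s hLs, hne⟩
  have hfinΦ : ∀ s ∈ S, (Φ s ∩ support F).Finite := fun s _ =>
    (Uop_finsupp r f (n + 1) g t p).subset (by
      rintro L ⟨hL, h2⟩
      exact ⟨hsub s hL, h2⟩)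
  have hinner : ∀ s ∈ S, ∑ᶠ L ∈ Φ s, F L = Uop r f n g s (Estep r f (n + 1) s t p) := by
    intro s _
    simp only [hΦ]
    rw [finsum_mem_image ((List.append_left_injective _).injOn)]
    refine finsum_mem_congr rfl fun L' hL' => ?_
    obtain ⟨hlen, hsum, -⟩ := hL'
    rw [hF]
    show wtGen r f 1 (g : ℤ) (L' ++ [(t : ℤ) - (s : ℤ)]) p = _
    rw [wtGen_append]
    congr 1
    by_cases hst : s = t
    · subst hst
      rw [if_pos (by ring : (s : ℤ) - (s : ℤ) = 0)]
      have h1 : 1 + L'.length = n + 1 := by rw [hlen]; omega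
      show C (f (1 + L'.length) ((g : ℤ) + L'.sum)) * p = Estep r f (n + 1) s s p
      unfold Estep
      rw [if_pos rfl, h1, hsum]
    · have hne0 : ¬ ((t : ℤ) - (s : ℤ) = 0) := by
        intro h
        have : s = t := by omega
        exact hst this
      rw [if_neg hne0]
      show J r (-((t : ℤ) - (s : ℤ))) p = Estep r f (n + 1) s t p
      unfold Estep
      rw [if_neg hst]
      have h3 : -((t : ℤ) - (s : ℤ)) = (s : ℤ) - (t : ℤ) := by ring
      rw [h3]
  calc Uop r f (n + 1) g t p
      = ∑ᶠ L ∈ NNB g (n + 1) t, F L := rfl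
    _ = ∑ᶠ L ∈ ⋃ s ∈ (S : Set ℕ), Φ s, F L := hstep1
    _ = ∑ s ∈ S, ∑ᶠ L ∈ Φ s, F L := finsum_mem_biUnion_finset F S Φ hdisj hfinΦ
    _ = ∑ s ∈ S, Uop r f n g s (Estep r f (n + 1) s t p) := Finset.sum_congr rfl hinner

end Stmt6Aux
namespace Stmt6Aux

/-! ### The scalar coefficients `Ω` and their identities -/

def Om (r : ℕ) (q : ℕ → RR r) : ℕ → ℕ → ℤ → RR r
  | 0, 0, _ => 1
  | 0, _ + 1, _ => 0
  | _ + 1, 0, _ => 1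
  | N + 1, j + 1, τ =>
      Om r q N (j + 1) τ
        + (q (N + 1) + cc r * (((N : ℤ) + τ : ℤ) : RR r)) * Om r q N j (τ + 1)

lemma Om_zero_left (r : ℕ) (q : ℕ → RR r) (N : ℕ) (τ : ℤ) : Om r q N 0 τ = 1 := by
  cases N <;> rfl

lemma Om_succ (r : ℕ) (q : ℕ → RR r) (N j : ℕ) (τ : ℤ) :
    Om r q (N + 1) (j + 1) τ
      = Om r q N (j + 1) τ
        + (q (N + 1) + cc r * (((N : ℤ) + τ : ℤ) : RR r)) * Om r q N j (τ + 1) := rfl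

lemma Om_of_lt (r : ℕ) (q : ℕ → RR r) : ∀ (N j : ℕ) (τ : ℤ), N < j → Om r q N j τ = 0 := by
  intro N
  induction N with
  | zero =>
    intro j τ h
    match j, h with
    | j + 1, _ => rfl
  | succ N ih =>
    intro j τ h
    match j, h with
    | j + 1, h =>
      rw [Om_succ, ih (j + 1) τ (by omega), ih j (τ + 1) (by omega), mul_zero, add_zero]

lemma Om_delta (r : ℕ) (q : ℕ → RR r) : ∀ (M j : ℕ) (τ : ℤ),
    Om r q M (j + 1) (τ + 1)
      = Om r q M (j + 1) τ
        + cc r * (((M : ℤ) - (j : ℤ) : ℤ) : RR r) * Om r q M j (τ + 1) := by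
  intro M
  induction M with
  | zero =>
    intro j τ
    cases j with
    | zero =>
      have h1 : Om r q 0 1 (τ + 1) = 0 := rfl
      have h2 : Om r q 0 1 τ = 0 := rfl
      have h3 : Om r q 0 0 (τ + 1) = 1 := rfl
      rw [h1, h2, h3]
      push_cast
      ring
    | succ j' =>
      have h1 : Om r q 0 (j' + 1 + 1) (τ + 1) = 0 := rfl
      have h2 : Om r q 0 (j' + 1 + 1) τ = 0 := rfl
      have h3 : Om r q 0 (j' + 1) (τ + 1) = 0 := rfl
      rw [h1, h2, h3]
      ring
  | succ M ih =>
    intro j τ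
    cases j with
    | zero =>
      rw [Om_succ, Om_succ, ih 0 τ]
      rw [Om_zero_left, Om_zero_left, Om_zero_left]
      push_cast
      ring
    | succ j' =>
      rw [Om_succ, Om_succ, Om_succ, ih (j' + 1) τ, ih j' (τ + 1)]
      push_cast
      ring

lemma Om_prime (r : ℕ) (q : ℕ → RR r) (N j : ℕ) (τ : ℤ) :
    Om r q (N + 1) (j + 1) τ
      = Om r q N (j + 1) (τ + 1)
        + (q (N + 1) + cc r * ((τ + (j : ℤ) : ℤ) : RR r)) * Om r q N j (τ + 1) := by
  have h := Om_delta r q N j τ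
  rw [Om_succ]
  push_cast at h ⊢
  linear_combination -h

end Stmt6Aux
namespace Stmt6Aux

open Function

/-! ### The support finset for the one-step recursion -/

def SS (r : ℕ) (p : PP r) (t : ℕ) : Finset ℕ :=
  insert t ((Finset.range (t + 1)) ∪ (p.vars.image (· + t)))

lemma SS_mem_self (r : ℕ) (p : PP r) (t : ℕ) : t ∈ SS r p t := Finset.mem_insert_self _ _

lemma SS_spec (r : ℕ) (p : PP r) (t : ℕ) :
    ∀ s : ℕ, s ∉ SS r p t → s ≠ t ∧ J r ((s : ℤ) - (t : ℤ)) p = 0 := by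
  intro s hs
  have hst : s ≠ t := by
    intro h
    exact hs (by rw [h]; exact SS_mem_self r p t)
  have hgt : t < s := by
    by_contra h
    push_neg at h
    exact hs (Finset.mem_insert_of_mem (Finset.mem_union_left _ (Finset.mem_range.mpr (by omega))))
  have hv : s - t ∉ p.vars := by
    intro hmem
    exact hs (Finset.mem_insert_of_mem (Finset.mem_union_right _
      (Finset.mem_image.mpr ⟨s - t, hmem, by omega⟩)))
  refine ⟨hst, ?_⟩
  have hpos : (0 : ℤ) < (s : ℤ) - (t : ℤ) := by omega
  rw [J, if_pos hpos]
  have hnat : ((s : ℤ) - (t : ℤ)).toNat = s - t := by omega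
  show C (hb r) * ((((s : ℤ) - (t : ℤ)).toNat : ℕ) : PP r) * pderiv ((s : ℤ) - (t : ℤ)).toNat p = 0
  rw [hnat, pderiv_vanish hv, mul_zero]

/-! ### The main identity -/

lemma mainId (r : ℕ) (q : ℕ → RR r) (b : ℤ) (g : ℕ) :
    ∀ (N t : ℕ) (p : PP r),
      Uop r (fq r q) N g t p
        = ∑ j ∈ Finset.range (N + 1),
            C (Om r q N j (b - (N : ℤ))) * Uop r (fq r (wq r b)) (N - j) g t p := by
  intro N
  induction N with
  | zero =>
    intro t p
    rw [Finset.sum_range_one]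
    have h1 : Om r q 0 0 (b - ((0 : ℕ) : ℤ)) = 1 := rfl
    rw [h1, map_one, one_mul]
    rw [Uop_len_zero, Uop_len_zero]
  | succ N ih =>
    intro t p
    have htS := SS_mem_self r p t
    have hSp := SS_spec r p t
    set S := SS r p t with hSdef
    rw [Brec r (fq r q) N g t p S htS hSp]
    have hIH : ∀ s ∈ S,
        Uop r (fq r q) N g s (Estep r (fq r q) (N + 1) s t p)
          = ∑ j ∈ Finset.range (N + 1), C (Om r q N j (b - (N : ℤ)))
              * Uop r (fq r (wq r b)) (N - j) g s (Estep r (fq r q) (N + 1) s t p) :=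
      fun s _ => ih s _
    rw [Finset.sum_congr rfl hIH, Finset.sum_comm]
    have hinner : ∀ j ∈ Finset.range (N + 1),
        ∑ s ∈ S, C (Om r q N j (b - (N : ℤ)))
            * Uop r (fq r (wq r b)) (N - j) g s (Estep r (fq r q) (N + 1) s t p)
          = C (Om r q N j (b - (N : ℤ))) *
              (Uop r (fq r (wq r b)) (N - j + 1) g t p
                + C (q (N + 1) + cc r * ((b - (N : ℤ) - 1 + (j : ℤ) : ℤ) : RR r))
                    * Uop r (fq r (wq r b)) (N - j) g t p) := by
      intro j hj
      have hj' : j ≤ N := by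
        rw [Finset.mem_range] at hj; omega
      rw [← Finset.mul_sum]
      congr 1
      have hEsplit : ∀ s ∈ S, Estep r (fq r q) (N + 1) s t p
          = Estep r (fq r (wq r b)) (N - j + 1) s t p
            + (if s = t then
                C (q (N + 1) + cc r * ((b - (N : ℤ) - 1 + (j : ℤ) : ℤ) : RR r)) * p
              else 0) := by
        intro s _
        by_cases hst : s = t
        · subst hst
          unfold Estep
          rw [if_pos rfl, if_pos rfl, if_pos rfl, ← add_mul, ← map_add]
          congr 1
          unfold fq wq
          have hc : ((N - j + 1 : ℕ) : ℤ) = (N : ℤ) - (j : ℤ) + 1 := by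
            push_cast [Nat.cast_sub hj']
            ring
          push_cast [hc]
          ring
        · unfold Estep
          rw [if_neg hst, if_neg hst, if_neg hst, add_zero]
      rw [Finset.sum_congr rfl (fun s hs => by rw [hEsplit s hs, Uop_add])]
      rw [Finset.sum_add_distrib]
      congr 1
      · exact (Brec r (fq r (wq r b)) (N - j) g t p S htS hSp).symm
      · rw [Finset.sum_eq_single_of_mem t htS
          (fun s _ hne => by rw [if_neg hne, Uop_zero])]
        rw [if_pos rfl, Uop_Cmul]
    rw [Finset.sum_congr rfl hinner]
    -- final reassembly
    set V : ℕ → PP r := fun m => Uop r (fq r (wq r b)) m g t p with hV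
    set A : ℕ → RR r := fun j => Om r q N j (b - (N : ℤ)) with hA
    set D : ℕ → RR r := fun j =>
      q (N + 1) + cc r * ((b - (N : ℤ) - 1 + (j : ℤ) : ℤ) : RR r) with hD
    have hVm : ∀ m, Uop r (fq r (wq r b)) m g t p = V m := fun _ => rfl
    have hAj : ∀ j, Om r q N j (b - (N : ℤ)) = A j := fun _ => rfl
    have hDj : ∀ j : ℕ,
        (q (N + 1) + cc r * ((b - (N : ℤ) - 1 + (j : ℤ) : ℤ) : RR r)) = D j := fun _ => rfl
    simp only [hVm, hAj, hDj]
    have hτ : b - ((N + 1 : ℕ) : ℤ) + 1 = b - (N : ℤ) := by push_cast; ring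
    have hAtop : A (N + 1) = 0 := Om_of_lt r q N (N + 1) _ (by omega)
    have hA0 : A 0 = 1 := Om_zero_left r q N _
    have hR : ∑ j ∈ Finset.range (N + 1), C (A j) * (V (N - j + 1) + C (D j) * V (N - j))
        = (∑ i ∈ Finset.range (N + 1), C (A (i + 1)) * V (N - i))
          + (∑ i ∈ Finset.range (N + 1), C (A i) * (C (D i) * V (N - i)))
          + V (N + 1) := by
      rw [Finset.sum_congr rfl
        (fun j _ => mul_add (C (A j)) (V (N - j + 1)) (C (D j) * V (N - j))),
        Finset.sum_add_distrib]
      have h1 : ∑ j ∈ Finset.range (N + 1), C (A j) * V (N - j + 1)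
          = (∑ i ∈ Finset.range (N + 1), C (A (i + 1)) * V (N - i)) + V (N + 1) := by
        rw [Finset.sum_range_succ']
        have h2 : ∀ i ∈ Finset.range N,
            C (A (i + 1)) * V (N - (i + 1) + 1) = C (A (i + 1)) * V (N - i) := by
          intro i hi
          rw [Finset.mem_range] at hi
          have : N - (i + 1) + 1 = N - i := by omega
          rw [this]
        rw [Finset.sum_congr rfl h2, hA0, map_one, one_mul]
        have h3 : N - 0 + 1 = N + 1 := by omega
        rw [h3]
        congr 1
        rw [Finset.sum_range_succ, hAtop, map_zero, zero_mul, add_zero]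
      rw [h1]
      ring
    have hL : ∑ j ∈ Finset.range (N + 1 + 1),
          C (Om r q (N + 1) j (b - ((N + 1 : ℕ) : ℤ))) * V (N + 1 - j)
        = (∑ i ∈ Finset.range (N + 1), C (A (i + 1)) * V (N - i))
          + (∑ i ∈ Finset.range (N + 1), C (A i) * (C (D i) * V (N - i)))
          + V (N + 1) := by
      rw [Finset.sum_range_succ']
      have hf0 : C (Om r q (N + 1) 0 (b - ((N + 1 : ℕ) : ℤ))) * V (N + 1 - 0)
          = V (N + 1) := by
        rw [Om_zero_left, map_one, one_mul, Nat.sub_zero]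
      have hfi : ∀ i ∈ Finset.range (N + 1),
          C (Om r q (N + 1) (i + 1) (b - ((N + 1 : ℕ) : ℤ))) * V (N + 1 - (i + 1))
            = C (A (i + 1)) * V (N - i) + C (A i) * (C (D i) * V (N - i)) := by
        intro i hi
        have h1 : N + 1 - (i + 1) = N - i := by omega
        rw [h1, Om_prime, hτ]
        have h2 : (b - ((N + 1 : ℕ) : ℤ) + (i : ℤ)) = b - (N : ℤ) - 1 + (i : ℤ) := by
          push_cast; ring
        rw [h2]
        simp only [hAj, hDj]
        rw [map_add, map_mul, add_mul]
        ring
      rw [Finset.sum_congr rfl hfi, Finset.sum_add_distrib, hf0]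
    rw [hR, ← hL]

end Stmt6Aux
namespace Stmt6Aux

open Function

/-! ### `IncLists` and `OmGen` -/

lemma IncLists_finite : ∀ (j lo hi : ℕ), (IncLists j lo hi).Finite
  | 0, lo, hi => by
    apply Set.Finite.subset (Set.finite_singleton ([] : List ℕ))
    rintro l ⟨hl, -, -⟩
    simp [List.length_eq_zero_iff.mp hl]
  | j + 1, lo, hi => by
    apply Set.Finite.subset (Set.Finite.biUnion (Set.finite_Iic hi)
      (fun h _ => (IncLists_finite j lo hi).image (h :: ·)))
    rintro l ⟨hl, hch, hbd⟩
    rcases l with _ | ⟨a, l⟩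
    · simp at hl
    have hmem : a ∈ Set.Iic hi := (hbd a (by simp)).2
    refine Set.mem_biUnion hmem ⟨l, ⟨by simpa using hl, (List.isChain_cons.mp hch).2,
      fun c hc => hbd c (by simp [hc])⟩, rfl⟩

lemma IncLists_zero_eq (lo hi : ℕ) : IncLists 0 lo hi = {([] : List ℕ)} := by
  ext l
  simp only [IncLists, Set.mem_setOf_eq, List.length_eq_zero_iff, Set.mem_singleton_iff]
  constructor
  · rintro ⟨rfl, -, -⟩; rfl
  · rintro rfl; exact ⟨rfl, List.isChain_nil, by simp⟩

lemma IncLists_bot_eq (j : ℕ) : IncLists (j + 1) 1 0 = ∅ := by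
  ext l
  simp only [IncLists, Set.mem_setOf_eq, Set.mem_empty_iff_false, iff_false, not_and]
  intro hlen hch hbd
  rcases l with _ | ⟨a, l⟩
  · simp at hlen
  have h1 := hbd a (by simp)
  omega

lemma chain'_succ {l : List ℕ} (h : l.Chain' (· < ·)) :
    (l.map (· + 1)).Chain' (· < ·) := by
  show List.IsChain _ _
  rw [List.isChain_map]
  exact List.IsChain.imp (fun a b hab => by omega) h

lemma chain'_pred : ∀ (l : List ℕ), l.Chain' (· < ·) → (∀ c ∈ l, 1 ≤ c) →
    (l.map (· - 1)).Chain' (· < ·)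
  | [], _, _ => List.isChain_nil
  | [a], _, _ => List.isChain_singleton _
  | a :: b :: l, h, hb => by
    obtain ⟨hab, htail⟩ := List.isChain_cons_cons.mp h
    simp only [List.map_cons]
    refine List.isChain_cons_cons.mpr ⟨?_, ?_⟩
    · have h1 := hb a (by simp)
      omega
    · have := chain'_pred (b :: l) htail (fun c hc => hb c (by simp [hc]))
      exact this

lemma map_pred_succ {l : List ℕ} (h1 : ∀ c ∈ l, 1 ≤ c) :
    (l.map (· - 1)).map (· + 1) = l := by
  rw [List.map_map]
  conv_rhs => rw [← List.map_id l]
  apply List.map_congr_left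
  intro a ha
  have := h1 a ha
  simp only [Function.comp_apply, id_eq]
  omega

lemma enumFrom_map_map {α β γ : Type*} (g : α → β) (F : ℕ × β → γ) :
    ∀ (l : List α) (n : ℕ),
      (((l.map g).zipIdx n).map Prod.swap).map F
        = ((l.zipIdx n).map Prod.swap).map (fun md => F (md.1, g md.2))
  | [], _ => rfl
  | a :: l, n => by
    simp only [List.map_cons, List.zipIdx_cons, Prod.swap_prod_mk]
    rw [enumFrom_map_map g F l (n + 1)]

lemma enum_map_map {α β γ : Type*} (g : α → β) (F : ℕ × β → γ) (l : List α) :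
    (((l.map g).zipIdx).map Prod.swap).map F
      = (l.zipIdx.map Prod.swap).map (fun md => F (md.1, g md.2)) :=
  enumFrom_map_map g F l 0

lemma enum_cons_aux {α : Type*} (a : α) (l : List α) :
    ((a :: l).zipIdx.map Prod.swap)
      = (0, a) :: ((l.zipIdx.map Prod.swap).map (Prod.map (· + 1) id)) := by
  rw [List.zipIdx_cons', List.map_cons, List.map_map, List.map_map]
  rfl

lemma IncLists_succ_split (j N : ℕ) :
    IncLists (j + 1) 1 (N + 1)
      = (List.map (· + 1)) '' IncLists (j + 1) 1 N
        ∪ (fun ns => 1 :: List.map (· + 1) ns) '' IncLists j 1 N := by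
  ext l
  constructor
  · rintro ⟨hlen, hch, hbd⟩
    have hpw : l.Pairwise (· < ·) := List.isChain_iff_pairwise.mp hch
    rcases l with _ | ⟨a, tl⟩
    · simp at hlen
    have ha1 : 1 ≤ a := (hbd a (by simp)).1
    have htlgt : ∀ b ∈ tl, a < b := (List.pairwise_cons.mp hpw).1
    have htlch : tl.Chain' (· < ·) := (List.isChain_cons.mp hch).2
    by_cases hA : a = 1
    · subst hA
      right
      refine ⟨tl.map (· - 1), ⟨by simpa using hlen, ?_, ?_⟩, ?_⟩
      · exact chain'_pred tl htlch (fun c hc => by have := htlgt c hc; omega)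
      · intro c hc
        obtain ⟨x, hx, rfl⟩ := List.mem_map.mp hc
        have h1 := htlgt x hx
        have h2 := (hbd x (by simp [hx])).2
        omega
      · simp only []
        rw [map_pred_succ (fun c hc => by have := htlgt c hc; omega)]
    · left
      have ha2 : 2 ≤ a := by omega
      have hall2 : ∀ c ∈ a :: tl, 2 ≤ c := by
        intro c hc
        rcases List.mem_cons.mp hc with rfl | hc'
        · exact ha2
        · have := htlgt c hc'; omega
      refine ⟨(a :: tl).map (· - 1), ⟨by simpa using hlen, ?_, ?_⟩, ?_⟩
      · exact chain'_pred _ hch (fun c hc => by have := hall2 c hc; omega)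
      · intro c hc
        obtain ⟨x, hx, rfl⟩ := List.mem_map.mp hc
        have h1 := hall2 x hx
        have h2 := (hbd x hx).2
        omega
      · rw [map_pred_succ (fun c hc => by have := hall2 c hc; omega)]
  · rintro (⟨ms, ⟨hlen, hch, hbd⟩, rfl⟩ | ⟨ms, ⟨hlen, hch, hbd⟩, rfl⟩)
    · refine ⟨by simpa using hlen, chain'_succ hch, ?_⟩
      intro c hc
      obtain ⟨x, hx, rfl⟩ := List.mem_map.mp hc
      have := hbd x hx
      omega
    · refine ⟨by simpa using hlen, ?_, ?_⟩
      · refine List.isChain_cons.mpr ⟨?_, chain'_succ hch⟩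
        intro b hb
        rcases ms with _ | ⟨x, ms'⟩
        · simp at hb
        · simp only [List.map_cons, List.head?_cons, Option.mem_def, Option.some.injEq] at hb
          have := (hbd x (by simp)).1
          omega
      · intro c hc
        rcases List.mem_cons.mp hc with rfl | hc'
        · omega
        · obtain ⟨x, hx, rfl⟩ := List.mem_map.mp hc'
          have := hbd x hx
          omega

/-- `Σ_{N ≥ u_1 > … > u_j ≥ 1} ∏_m (q_{u_m} + c (u_m + m - 2 + τ))`, written
in terms of increasing lists `n_m = N + 1 - u_m`. -/
def OmGen (r : ℕ) (q : ℕ → RR r) (N j : ℕ) (τ : ℤ) : RR r :=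
  ∑ᶠ ns ∈ IncLists j 1 N,
    ((ns.zipIdx.map Prod.swap).map fun md =>
      q (N + 1 - md.2) + cc r * (((N : ℤ) - (md.2 : ℤ) + (md.1 : ℤ) + τ : ℤ) : RR r)).prod

lemma OmGen_zero (r : ℕ) (q : ℕ → RR r) (N : ℕ) (τ : ℤ) : OmGen r q N 0 τ = 1 := by
  unfold OmGen
  rw [IncLists_zero_eq, finsum_mem_singleton]
  simp

lemma OmGen_eq_Om (r : ℕ) (q : ℕ → RR r) : ∀ (N j : ℕ) (τ : ℤ), OmGen r q N j τ = Om r q N j τ := by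
  intro N
  induction N with
  | zero =>
    intro j τ
    cases j with
    | zero => rw [OmGen_zero]; rfl
    | succ j' =>
      unfold OmGen
      rw [IncLists_bot_eq, finsum_mem_empty]
      rfl
  | succ N ihN =>
    intro j τ
    cases j with
    | zero => rw [OmGen_zero, Om_zero_left]
    | succ j' =>
      unfold OmGen
      rw [IncLists_succ_split j' N]
      have hsucc : Function.Injective (· + 1 : ℕ → ℕ) := add_left_injective 1
      have hdisj : Disjoint ((List.map (· + 1)) '' IncLists (j' + 1) 1 N)
          ((fun ns => 1 :: List.map (· + 1) ns) '' IncLists j' 1 N) := by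
        rw [Set.disjoint_left]
        rintro l ⟨ms, hms, rfl⟩ ⟨ns, hns, heq⟩
        have h1 : (1 : ℕ) ∈ List.map (· + 1) ms := by
          rw [← heq]; simp
        obtain ⟨x, hx, hx1⟩ := List.mem_map.mp h1
        have := (hms.2.2 x hx).1
        omega
      rw [finsum_mem_union hdisj ((IncLists_finite (j' + 1) 1 N).image _)
        ((IncLists_finite j' 1 N).image _)]
      rw [finsum_mem_image ((List.map_injective_iff.mpr hsucc).injOn),
        finsum_mem_image (fun ns1 _ ns2 _ h => by
          rw [List.cons.injEq] at h
          exact (List.map_injective_iff.mpr hsucc) h.2)]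
      have hApart : ∀ ns ∈ IncLists (j' + 1) 1 N,
          (((ns.map (· + 1)).zipIdx.map Prod.swap).map fun md =>
              q (N + 1 + 1 - md.2)
                + cc r * ((((N + 1 : ℕ) : ℤ) - (md.2 : ℤ) + (md.1 : ℤ) + τ : ℤ) : RR r)).prod
            = ((ns.zipIdx.map Prod.swap).map fun md =>
                q (N + 1 - md.2)
                  + cc r * (((N : ℤ) - (md.2 : ℤ) + (md.1 : ℤ) + τ : ℤ) : RR r)).prod := by
        intro ns _
        rw [enum_map_map]
        congr 1
        apply List.map_congr_left
        rintro ⟨m, x⟩ -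
        simp only []
        have e1 : N + 1 + 1 - (x + 1) = N + 1 - x := by omega
        have e2 : (((N + 1 : ℕ) : ℤ) - ((x + 1 : ℕ) : ℤ) + (m : ℤ) + τ : ℤ)
            = ((N : ℤ) - (x : ℤ) + (m : ℤ) + τ : ℤ) := by push_cast; ring
        rw [e1, e2]
      have hBpart : ∀ ns ∈ IncLists j' 1 N,
          (((1 :: ns.map (· + 1)).zipIdx.map Prod.swap).map fun md =>
              q (N + 1 + 1 - md.2)
                + cc r * ((((N + 1 : ℕ) : ℤ) - (md.2 : ℤ) + (md.1 : ℤ) + τ : ℤ) : RR r)).prod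
            = (q (N + 1) + cc r * (((N : ℤ) + τ : ℤ) : RR r)) *
                ((ns.zipIdx.map Prod.swap).map fun md =>
                  q (N + 1 - md.2)
                    + cc r * (((N : ℤ) - (md.2 : ℤ) + (md.1 : ℤ) + (τ + 1) : ℤ) : RR r)).prod := by
        intro ns _
        rw [enum_cons_aux, List.map_cons, List.map_map, List.prod_cons]
        congr 1
        · have e1 : N + 1 + 1 - 1 = N + 1 := by omega
          have e2 : (((N + 1 : ℕ) : ℤ) - ((1 : ℕ) : ℤ) + ((0 : ℕ) : ℤ) + τ : ℤ)
              = ((N : ℤ) + τ : ℤ) := by push_cast; ring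
          show q (N + 1 + 1 - 1)
              + cc r * ((((N + 1 : ℕ) : ℤ) - ((1 : ℕ) : ℤ) + ((0 : ℕ) : ℤ) + τ : ℤ) : RR r) = _
          rw [e1, e2]
        · rw [show ((fun md : ℕ × ℕ =>
              q (N + 1 + 1 - md.2)
                + cc r * ((((N + 1 : ℕ) : ℤ) - (md.2 : ℤ) + (md.1 : ℤ) + τ : ℤ) : RR r))
              ∘ Prod.map (· + 1) id) = fun md : ℕ × ℕ =>
              q (N + 1 + 1 - md.2)
                + cc r * ((((N + 1 : ℕ) : ℤ) - (md.2 : ℤ) + ((md.1 + 1 : ℕ) : ℤ) + τ : ℤ) : RR r)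
            from funext fun md => rfl]
          rw [enum_map_map]
          congr 1
          apply List.map_congr_left
          rintro ⟨m, x⟩ -
          simp only []
          have e1 : N + 1 + 1 - (x + 1) = N + 1 - x := by omega
          have e2 : (((N + 1 : ℕ) : ℤ) - ((x + 1 : ℕ) : ℤ) + ((m + 1 : ℕ) : ℤ) + τ : ℤ)
              = ((N : ℤ) - (x : ℤ) + (m : ℤ) + (τ + 1) : ℤ) := by push_cast; ring
          rw [e1, e2]
      rw [finsum_mem_congr rfl hApart, finsum_mem_congr rfl hBpart]
      have hBsum : ∑ᶠ ns ∈ IncLists j' 1 N,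
          (q (N + 1) + cc r * (((N : ℤ) + τ : ℤ) : RR r)) *
            ((ns.zipIdx.map Prod.swap).map fun md =>
              q (N + 1 - md.2)
                + cc r * (((N : ℤ) - (md.2 : ℤ) + (md.1 : ℤ) + (τ + 1) : ℤ) : RR r)).prod
          = (q (N + 1) + cc r * (((N : ℤ) + τ : ℤ) : RR r)) *
              ∑ᶠ ns ∈ IncLists j' 1 N,
                ((ns.zipIdx.map Prod.swap).map fun md =>
                  q (N + 1 - md.2)
                    + cc r * (((N : ℤ) - (md.2 : ℤ) + (md.1 : ℤ) + (τ + 1) : ℤ) : RR r)).prod := by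
        rw [finsum_mem_eq_finite_toFinset_sum _ (IncLists_finite j' 1 N),
          finsum_mem_eq_finite_toFinset_sum _ (IncLists_finite j' 1 N),
          Finset.mul_sum]
      rw [hBsum]
      have hA' := ihN (j' + 1) τ
      have hB' := ihN j' (τ + 1)
      unfold OmGen at hA' hB'
      rw [hA', hB', Om_succ]

end Stmt6Aux
namespace Stmt6Aux

lemma OmP_eq (r j : ℕ) : OmP r j = Om r (Pn r) r j 0 := by
  rw [← OmGen_eq_Om]
  unfold OmP OmGen
  apply finsum_mem_congr rfl
  intro ns _
  congr 1
  apply List.map_congr_left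
  intro md _
  show Pn r (r + 1 - md.2) + hb r * bb r * (((r : ℤ) - (md.2 : ℤ) + (md.1 : ℤ) : ℤ) : RR r)
      = Pn r (r + 1 - md.2) + cc r * (((r : ℤ) - (md.2 : ℤ) + (md.1 : ℤ) + 0 : ℤ) : RR r)
  rw [add_zero]
  rfl

end Stmt6Aux

open Stmt6Aux

/-- **Theorem (the `P`-part of the simplification of the operators `D_k`, via Lemma 4.7
of the paper).** For `r ≥ 1`, `k ≥ 0` and `R = ℚ[ℏ,𝔟,P_1,…,P_r]`, one has the identity
of locally finite `R`-linear operators on `R[p̃]`: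
`Σ_{γ ∈ Γ^{≥0}_{(0,k)→(r,0)}} wt̃(γ|(P_1,…,P_r))
  = Σ_{j=0}^{r} (Σ_{1≤n_1<⋯<n_j≤r} ∏_{m=1}^{j} (P_{r+1−n_m} + ℏ𝔟(r−n_m+m−1)))
      · Σ_{γ ∈ Γ^{≥0}_{(0,k)→(r−j,0)}} Ŵ_r(γ)`. -/
theorem stmt6 (r : ℕ) (hr : 1 ≤ r) (k : ℕ) :
    (∀ p : PP r,
        {L ∈ BridgeSet (k : ℤ) r 0 | wtP r 1 (k : ℤ) L p ≠ 0}.Finite) ∧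
    (∀ p : PP r, ∀ j : ℕ, j ≤ r →
        {L ∈ BridgeSet (k : ℤ) (r - j) 0 | wtHat r 1 (k : ℤ) L p ≠ 0}.Finite) ∧
    (∀ p : PP r,
        ∑ᶠ L ∈ BridgeSet (k : ℤ) r 0, wtP r 1 (k : ℤ) L p
          = ∑ j ∈ Finset.range (r + 1),
              C (OmP r j) * ∑ᶠ L ∈ BridgeSet (k : ℤ) (r - j) 0, wtHat r 1 (k : ℤ) L p) := by
  have hb0 : ∀ n : ℕ, BridgeSet (k : ℤ) n 0 = NNB k n 0 := by
    intro n
    have h := bridge_eq_NNB k n 0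
    simpa using h
  have hflat : (fun (u : ℕ) (y : ℤ) => -(hb r * bb r * ((y + (r : ℤ) - (u : ℤ) : ℤ) : RR r)))
      = fq r (wq r (r : ℤ)) := by
    funext u y
    unfold fq wq cc
    push_cast
    ring
  have hflatH : wtHat r = wtGen r (fq r (wq r (r : ℤ))) := by
    unfold wtHat
    rw [hflat]
  refine ⟨?_, ?_, ?_⟩
  · intro p
    apply Set.Finite.subset ((finPairs r (fq r (Pn r)) 0 r 1 p).image Prod.snd)
    rintro L ⟨hL, hne⟩
    refine ⟨(k, L), ⟨?_, ?_⟩, rfl⟩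
    · rw [← hb0 r]; exact hL
    · exact hne
  · intro p j hj
    apply Set.Finite.subset
      ((finPairs r (fun u y => -(hb r * bb r * ((y + (r : ℤ) - (u : ℤ) : ℤ) : RR r))) 0
        (r - j) 1 p).image Prod.snd)
    rintro L ⟨hL, hne⟩
    refine ⟨(k, L), ⟨?_, ?_⟩, rfl⟩
    · rw [← hb0 (r - j)]; exact hL
    · exact hne
  · intro p
    have hmain := mainId r (Pn r) (r : ℤ) k r 0 p
    have hLHS : ∑ᶠ L ∈ BridgeSet (k : ℤ) r 0, wtP r 1 (k : ℤ) L p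
        = Uop r (fq r (Pn r)) r k 0 p := by
      rw [hb0 r]; rfl
    have hRHSj : ∀ j : ℕ, (∑ᶠ L ∈ BridgeSet (k : ℤ) (r - j) 0, wtHat r 1 (k : ℤ) L p)
        = Uop r (fq r (wq r (r : ℤ))) (r - j) k 0 p := by
      intro j
      rw [hb0 (r - j)]
      unfold Uop
      apply finsum_mem_congr rfl
      intro L _
      rw [hflatH]
    rw [hLHS, hmain]
    apply Finset.sum_congr rfl
    intro j _
    rw [hRHSj j, OmP_eq, sub_self]

end Stmt6
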